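/- Let H be a complex Hilbert space and let L be a bounded skew-adjoint operator on H, i.e. L* = −L. Then 1 + L is invertible and the operator norm of L ∘ (1 + L)⁻¹ satisfies ‖L ∘ (1 + L)⁻¹‖ ≤ ‖L‖ / √(1 + ‖L‖²); in particular ‖L ∘ (1 + L)⁻¹‖ < 1. -/

import Mathlib

/-- If `L` is a bounded skew-adjoint operator on a complex Hilbert space, then `1 + L`
is invertible and `‖L(1+L)⁻¹‖ ≤ ‖L‖ / √(1 + ‖L‖²) < 1`. -/
theorem balanced_rigidity_stmt2
    {H : Type*} [NormedAddCommGroup H] [InnerProductSpace ℂ H] [CompleteSpace H]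
    (L : H →L[ℂ] H) (hskew : ContinuousLinearMap.adjoint L = -L) :
    IsUnit (1 + L) ∧
    ‖L ∘L Ring.inverse (1 + L)‖ ≤ ‖L‖ / Real.sqrt (1 + ‖L‖ ^ 2) ∧
    ‖L ∘L Ring.inverse (1 + L)‖ < 1 := by
  -- 1 + L is invertible via spectrum of the self-adjoint operator I • L
  have hU : IsUnit (1 + L) := by
    have hS : IsSelfAdjoint (Complex.I • L) := by
      rw [IsSelfAdjoint, star_smul, ContinuousLinearMap.star_eq_adjoint, hskew]
      simp
    by_contra hU
    have hmem : (-1 : ℂ) ∈ spectrum ℂ L := by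
      rw [spectrum.mem_iff]
      intro h
      apply hU
      have : algebraMap ℂ (H →L[ℂ] H) (-1) - L = -(1 + L) := by
        simp [map_neg, Algebra.algebraMap_eq_smul_one]; abel
      rw [this] at h
      simpa using h.neg
    have hmem2 : (Complex.I * (-1)) ∈ spectrum ℂ (Complex.I • L) := by
      have := spectrum.unit_smul_eq_smul (R := ℂ) (A := H →L[ℂ] H) L
        (Units.mk0 Complex.I Complex.I_ne_zero)
      rw [show (Units.mk0 Complex.I Complex.I_ne_zero : ℂˣ) • L = Complex.I • L from rfl] at this
      rw [this]
      exact ⟨-1, hmem, rfl⟩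
    have := hS.mem_spectrum_eq_re hmem2
    simp at this
  -- key norm identity
  have hre : ∀ x : H, RCLike.re (inner ℂ x (L x) : ℂ) = 0 := by
    intro x
    have h1 : (inner ℂ x (L x) : ℂ) = - inner ℂ (L x) x := by
      rw [← ContinuousLinearMap.adjoint_inner_right L, hskew]
      simp [inner_neg_right]
    have h2 : (inner ℂ (L x) x : ℂ) = starRingEnd ℂ (inner ℂ x (L x)) := by
      rw [inner_conj_symm]
    rw [h2] at h1
    have := congrArg Complex.re h1
    simp only [Complex.neg_re, Complex.conj_re] at this
    simp only [RCLike.re_to_complex]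
    linarith
  have hnorm : ∀ x : H, ‖(1 + L) x‖ ^ 2 = ‖x‖ ^ 2 + ‖L x‖ ^ 2 := by
    intro x
    have : (1 + L) x = x + L x := by simp
    rw [this, @norm_add_sq ℂ]
    simp [hre x]
  set N := ‖L‖ with hN
  have hNnn : 0 ≤ N := norm_nonneg L
  set s := Real.sqrt (1 + N ^ 2) with hs
  have hs2 : s ^ 2 = 1 + N ^ 2 := Real.sq_sqrt (by positivity)
  have hspos : 0 < s := Real.sqrt_pos.mpr (by positivity)
  have hinv : ∀ y : H, (1 + L) (Ring.inverse (1 + L) y) = y := by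
    intro y
    have := Ring.mul_inverse_cancel _ hU
    calc (1 + L) (Ring.inverse (1 + L) y) = ((1 + L) * Ring.inverse (1 + L)) y := rfl
      _ = y := by rw [this]; rfl
  have hbound : ‖L ∘L Ring.inverse (1 + L)‖ ≤ N / s := by
    apply ContinuousLinearMap.opNorm_le_bound _ (by positivity)
    intro y
    set x := Ring.inverse (1 + L) y with hx
    have hyx : ‖y‖ ^ 2 = ‖x‖ ^ 2 + ‖L x‖ ^ 2 := by
      rw [← hinv y, hnorm]
    have hLx : ‖L x‖ ≤ N * ‖x‖ := L.le_opNorm x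
    have : (L ∘L Ring.inverse (1 + L)) y = L x := rfl
    rw [this]
    rw [div_mul_eq_mul_div, le_div_iff₀ hspos]
    -- ‖L x‖ * s ≤ N * ‖y‖
    have h1 : (‖L x‖ * s) ^ 2 ≤ (N * ‖y‖) ^ 2 := by
      have : (N * ‖y‖) ^ 2 = N ^ 2 * (‖x‖ ^ 2 + ‖L x‖ ^ 2) := by
        rw [mul_pow, hyx]
      rw [this, mul_pow, hs2]
      nlinarith [norm_nonneg (L x), norm_nonneg x]
    exact (abs_le_of_sq_le_sq' h1 (by positivity)).2
  have hlt : N / s < 1 := by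
    rw [div_lt_one hspos]
    nlinarith [hs2, Real.sqrt_nonneg (1 + N ^ 2)]
  exact ⟨hU, hbound, lt_of_le_of_lt hbound hlt⟩
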